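/- arXiv:2111.02062 — 2 statements merged into one kernel-verified Lean document; each statement's English description precedes it below -/
import Mathlib

section
/- Let φ_E be a d × d kernel of nonnegative functions on ℝ≥0, zero in the E^c columns, with entries φ^{ij} = α^{ij} f^{ij} where f^{ij} ≥ 0 and ∫ f^{ij} = 1. If the spectral radius of the e × e submatrix α^{EE} is strictly less than 1, then for every (i,j), the series Σ_{n=1}^∞ ‖(φ_E^{⊗n})^{ij}‖₁ converges; hence Σ_{n=1}^∞ φ_E^{⊗n} converges entrywise in L¹(ℝ≥0). -/
open MeasureTheory Matrix Filter

noncomputable def L1norm (f : ℝ → ℝ) : ℝ := ∫ t in Set.Ioi (0:ℝ), |f t|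

noncomputable def conv (f g : ℝ → ℝ) : ℝ → ℝ := fun t => ∫ s in (0:ℝ)..t, f (t - s) * g s

noncomputable def mconv {ι κ σ : Type*} [Fintype κ] (φ : Matrix ι κ (ℝ → ℝ))
    (ψ : Matrix κ σ (ℝ → ℝ)) : Matrix ι σ (ℝ → ℝ) :=
  Matrix.of fun i j t => ∑ k, ∫ s in (0:ℝ)..t, φ i k (t - s) * ψ k j s

noncomputable def mconvPow {ι : Type*} [Fintype ι] (φ : Matrix ι ι (ℝ → ℝ)) : ℕ → Matrix ι ι (ℝ → ℝ)
  | 0 => φ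
  | n + 1 => mconv φ (mconvPow φ n)

noncomputable def specRad {ι : Type*} [Fintype ι] [DecidableEq ι] (A : Matrix ι ι ℝ) : ℝ :=
  sSup ((fun z : ℂ => ‖z‖) '' spectrum ℂ (A.map Complex.ofReal))

noncomputable def specRadC {ι : Type*} [Fintype ι] [DecidableEq ι] (A : Matrix ι ι ℂ) : ℝ :=
  sSup ((fun z : ℂ => ‖z‖) '' spectrum ℂ A)

open scoped ENNReal NNReal

noncomputable def eI (h : ℝ → ℝ) : ℝ≥0∞ := ∫⁻ t in Set.Ioi (0:ℝ), ENNReal.ofReal (h t)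

def Good (h : ℝ → ℝ) : Prop :=
  (∀ t, 0 ≤ t → 0 ≤ h t) ∧ ∃ H : ℝ → ℝ, Measurable H ∧ ∀ t, 0 < t → h t = H t

-- nonneg of conv
lemma conv_nonneg {f g : ℝ → ℝ} (hf : ∀ t, 0 ≤ t → 0 ≤ f t) (hg : ∀ t, 0 ≤ t → 0 ≤ g t) :
    ∀ t, 0 ≤ t → 0 ≤ conv f g t := by
  intro t ht
  unfold conv
  apply intervalIntegral.integral_nonneg ht
  intro s hs
  exact mul_nonneg (hf _ (by simp at hs; linarith [hs.2])) (hg _ hs.1)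

lemma measurable_K {f G : ℝ → ℝ} (hf : Measurable f) (hG : Measurable G) :
    Measurable (fun t => ∫⁻ s in Set.Ioc 0 t, ENNReal.ofReal (f (t - s) * G s)) := by
  have h1 : ∀ t, (∫⁻ s in Set.Ioc 0 t, ENNReal.ofReal (f (t - s) * G s))
      = ∫⁻ s, (fun p : ℝ × ℝ => if 0 < p.2 ∧ p.2 ≤ p.1 then
          ENNReal.ofReal (f (p.1 - p.2) * G p.2) else 0) (t, s) := by
    intro t
    rw [← lintegral_indicator measurableSet_Ioc]
    congr 1
    ext s
    rw [Set.indicator_apply]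
    simp only [Set.mem_Ioc]
  simp_rw [h1]
  have hmeas : Measurable (fun p : ℝ × ℝ => if 0 < p.2 ∧ p.2 ≤ p.1 then
      ENNReal.ofReal (f (p.1 - p.2) * G p.2) else 0) := by
    apply Measurable.ite
    · exact (measurableSet_lt measurable_const measurable_snd).inter
        (measurableSet_le measurable_snd measurable_fst)
    · exact ENNReal.measurable_ofReal.comp
        ((hf.comp (measurable_fst.sub measurable_snd)).mul (hG.comp measurable_snd))
    · exact measurable_const
  exact Measurable.lintegral_prod_right' hmeas

lemma conv_good {f g : ℝ → ℝ} (hfm : Measurable f) (hf0 : ∀ t, 0 ≤ t → 0 ≤ f t)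
    (hg : Good g) : Good (conv f g) ∧ eI (conv f g) ≤ eI f * eI g := by
  obtain ⟨hg0, G, hGm, hGe⟩ := hg
  set K : ℝ → ℝ≥0∞ := fun t => ∫⁻ s in Set.Ioc 0 t, ENNReal.ofReal (f (t - s) * G s) with hK
  have hKm : Measurable K := measurable_K hfm hGm
  have hconv : ∀ t, 0 < t → conv f g t = (K t).toReal := by
    intro t ht
    have h1 : conv f g t = ∫ s in Set.Ioc 0 t, f (t - s) * G s := by
      rw [conv, intervalIntegral.integral_of_le ht.le]
      apply setIntegral_congr_fun measurableSet_Ioc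
      intro s hs
      simp only
      rw [hGe s hs.1]
    rw [h1, integral_eq_lintegral_of_nonneg_ae]
    · apply ae_restrict_of_forall_mem measurableSet_Ioc
      intro s hs
      have h2 : G s = g s := (hGe s hs.1).symm
      simp only [Pi.zero_apply, h2]
      exact mul_nonneg (hf0 _ (by linarith [hs.2])) (hg0 _ hs.1.le)
    · exact ((hfm.comp (measurable_const.sub measurable_id)).mul hGm).aestronglyMeasurable
  constructor
  · refine ⟨conv_nonneg hf0 hg0, fun t => (K t).toReal, hKm.ennreal_toReal, hconv⟩
  -- the bound
  set W : ℝ × ℝ → ℝ≥0∞ := fun p => if 0 < p.2 ∧ p.2 ≤ p.1 then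
      ENNReal.ofReal (f (p.1 - p.2)) * ENNReal.ofReal (G p.2) else 0 with hW
  have hWm : Measurable W := by
    apply Measurable.ite
    · exact (measurableSet_lt measurable_const measurable_snd).inter
        (measurableSet_le measurable_snd measurable_fst)
    · exact (ENNReal.measurable_ofReal.comp (hfm.comp (measurable_fst.sub measurable_snd))).mul
        (ENNReal.measurable_ofReal.comp (hGm.comp measurable_snd))
    · exact measurable_const
  have hKW : ∀ t, K t = ∫⁻ s, W (t, s) := by
    intro t
    rw [hK]
    simp only
    rw [← lintegral_indicator measurableSet_Ioc]
    congr 1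
    ext s
    rw [Set.indicator_apply]
    simp only [Set.mem_Ioc, hW]
    by_cases h : 0 < s ∧ s ≤ t
    · rw [if_pos h, if_pos h, ENNReal.ofReal_mul (hf0 _ (by linarith [h.2]))]
    · rw [if_neg h, if_neg h]
  have step1 : eI (conv f g) ≤ ∫⁻ t in Set.Ioi 0, K t := by
    apply lintegral_mono_ae
    filter_upwards [ae_restrict_mem measurableSet_Ioi] with t ht
    rw [hconv t ht]
    exact ENNReal.ofReal_toReal_le
  have step2 : (∫⁻ t in Set.Ioi 0, K t) = ∫⁻ s, ∫⁻ t in Set.Ioi (0:ℝ), W (t, s) := by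
    simp_rw [hKW]
    exact lintegral_lintegral_swap hWm.aemeasurable
  have inner : ∀ s : ℝ, (∫⁻ t in Set.Ioi (0:ℝ), W (t, s))
      = Set.indicator (Set.Ioi (0:ℝ)) (fun s => eI f * ENNReal.ofReal (G s)) s := by
    intro s
    rcases le_or_gt s 0 with hs | hs
    · rw [Set.indicator_of_notMem (by simpa using hs)]
      have : ∀ t, W (t, s) = 0 := by
        intro t; rw [hW]; simp only
        rw [if_neg (by rintro ⟨h1, -⟩; linarith)]
      simp [this]
    · rw [Set.indicator_of_mem (by simpa using hs)]
      have h1 : ∀ t, W (t, s) = Set.indicator (Set.Ici s)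
          (fun t => ENNReal.ofReal (f (t - s)) * ENNReal.ofReal (G s)) t := by
        intro t
        rw [hW, Set.indicator_apply]
        simp only [Set.mem_Ici]
        by_cases h : s ≤ t
        · rw [if_pos ⟨hs, h⟩, if_pos h]
        · rw [if_neg (by tauto), if_neg h]
      simp_rw [h1]
      rw [lintegral_indicator measurableSet_Ici, Measure.restrict_restrict measurableSet_Ici]
      have h2 : Set.Ici s ∩ Set.Ioi 0 = Set.Ici s := by
        apply Set.inter_eq_left.2
        intro x hx
        simp only [Set.mem_Ici] at hx
        simp only [Set.mem_Ioi]
        linarith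
      rw [h2]
      rw [lintegral_mul_const'' (ENNReal.ofReal (G s))
        (f := fun a => ENNReal.ofReal (f (a - s)))
        ((ENNReal.measurable_ofReal.comp
        (hfm.comp (measurable_id.sub measurable_const))).aemeasurable)]
      congr 1
      -- translation invariance
      have h3 := (measurePreserving_add_right volume s).setLIntegral_comp_preimage_emb
        (Homeomorph.measurableEmbedding (Homeomorph.addRight s))
        (fun t => ENNReal.ofReal (f (t - s))) (Set.Ici s)
      have h4 : ((· + s) ⁻¹' Set.Ici s) = Set.Ici (0:ℝ) := by
        ext u; simp [Set.mem_Ici]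
      rw [h4] at h3
      rw [← h3]
      have h5 : (∫⁻ u in Set.Ici (0:ℝ), ENNReal.ofReal (f (u + s - s)))
          = ∫⁻ u in Set.Ici (0:ℝ), ENNReal.ofReal (f u) := by
        apply setLIntegral_congr_fun measurableSet_Ici
        intro u _
        norm_num
      rw [h5, eI, Measure.restrict_congr_set Ioi_ae_eq_Ici]
  calc eI (conv f g) ≤ ∫⁻ t in Set.Ioi 0, K t := step1
    _ = ∫⁻ s, ∫⁻ t in Set.Ioi (0:ℝ), W (t, s) := step2
    _ = ∫⁻ s in Set.Ioi 0, eI f * ENNReal.ofReal (G s) := by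
        simp_rw [inner]
        exact lintegral_indicator measurableSet_Ioi _
    _ = eI f * ∫⁻ s in Set.Ioi 0, ENNReal.ofReal (G s) :=
        lintegral_const_mul'' _ ((ENNReal.measurable_ofReal.comp hGm).aemeasurable)
    _ = eI f * eI g := by
        congr 1
        rw [eI]
        apply setLIntegral_congr_fun measurableSet_Ioi
        intro s hs
        beta_reduce
        rw [hGe s hs]

lemma Good.aemeas {h : ℝ → ℝ} (hg : Good h) :
    AEMeasurable (fun t => ENNReal.ofReal (h t)) (volume.restrict (Set.Ioi 0)) := by
  obtain ⟨-, H, hHm, hHe⟩ := hg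
  exact (ENNReal.measurable_ofReal.comp hHm).aemeasurable.congr
    (ae_restrict_of_forall_mem measurableSet_Ioi fun t ht => by
      simp only [Function.comp_apply, hHe t ht])

lemma good_sum {κ : Type*} [Fintype κ] {h : κ → ℝ → ℝ} (hg : ∀ k, Good (h k)) :
    Good (fun t => ∑ k, h k t) ∧ eI (fun t => ∑ k, h k t) = ∑ k, eI (h k) := by
  have hmem : ∀ k, Good (h k) := hg
  choose H hHm hHe using fun k => (hg k).2
  constructor
  · exact ⟨fun t ht => Finset.sum_nonneg fun k _ => (hg k).1 t ht,
      fun t => ∑ k, H k t, Finset.measurable_sum _ (fun k _ => hHm k),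
      fun t ht => Finset.sum_congr rfl fun k _ => hHe k t ht⟩
  · rw [eI]
    have h1 : (∫⁻ t in Set.Ioi (0:ℝ), ENNReal.ofReal (∑ k, h k t))
        = ∫⁻ t in Set.Ioi (0:ℝ), ∑ k, ENNReal.ofReal (h k t) := by
      apply setLIntegral_congr_fun measurableSet_Ioi
      intro t ht
      exact ENNReal.ofReal_sum_of_nonneg fun k _ => (hg k).1 t ht.le
    rw [h1, lintegral_finset_sum' _ fun k _ => (hg k).aemeas]
    rfl

lemma pow_entry_nonneg {ι : Type*} [Fintype ι] [DecidableEq ι] {B : Matrix ι ι ℝ}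
    (hB0 : ∀ i j, 0 ≤ B i j) : ∀ n i j, 0 ≤ (B ^ n) i j := by
  intro n
  induction n with
  | zero => intro i j; simp [Matrix.one_apply]; positivity
  | succ n ih =>
    intro i j
    rw [pow_succ, Matrix.mul_apply]
    exact Finset.sum_nonneg fun k _ => mul_nonneg (ih i k) (hB0 k j)

lemma mconvPow_good {ι : Type*} [Fintype ι] [DecidableEq ι] (φ : Matrix ι ι (ℝ → ℝ))
    (B : Matrix ι ι ℝ)
    (hφm : ∀ i j, Measurable (φ i j)) (hφ0 : ∀ i j t, 0 ≤ t → 0 ≤ φ i j t)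
    (hB : ∀ i j, eI (φ i j) = ENNReal.ofReal (B i j)) (hB0 : ∀ i j, 0 ≤ B i j) :
    ∀ n i j, Good (mconvPow φ n i j) ∧ eI (mconvPow φ n i j) ≤ ENNReal.ofReal ((B^(n+1)) i j) := by
  intro n
  induction n with
  | zero =>
    intro i j
    refine ⟨⟨fun t ht => hφ0 i j t ht, φ i j, hφm i j, fun t _ => rfl⟩, ?_⟩
    show eI (φ i j) ≤ _
    rw [hB i j, pow_one]
  | succ n ih =>
    intro i j
    have hrw : mconvPow φ (n+1) i j = fun t => ∑ k, conv (φ i k) (mconvPow φ n k j) t := rfl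
    have hgk : ∀ k : ι, Good (conv (φ i k) (mconvPow φ n k j)) ∧
        eI (conv (φ i k) (mconvPow φ n k j)) ≤ eI (φ i k) * eI (mconvPow φ n k j) :=
      fun k => conv_good (hφm i k) (fun t ht => hφ0 i k t ht) (ih k j).1
    obtain ⟨hgood, heq⟩ := good_sum (fun k => (hgk k).1)
    rw [hrw]
    refine ⟨hgood, ?_⟩
    rw [heq]
    calc (∑ k, eI (conv (φ i k) (mconvPow φ n k j)))
        ≤ ∑ k, ENNReal.ofReal (B i k) * ENNReal.ofReal ((B^(n+1)) k j) := by
          apply Finset.sum_le_sum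
          intro k _
          refine le_trans (hgk k).2 ?_
          rw [← hB i k]
          exact mul_le_mul_right (ih k j).2 _
      _ = ENNReal.ofReal ((B^(n+2)) i j) := by
          have : ∀ k : ι, ENNReal.ofReal (B i k) * ENNReal.ofReal ((B^(n+1)) k j)
              = ENNReal.ofReal (B i k * (B^(n+1)) k j) :=
            fun k => (ENNReal.ofReal_mul (hB0 i k)).symm
          simp_rw [this]
          rw [← ENNReal.ofReal_sum_of_nonneg
            (fun k _ => mul_nonneg (hB0 i k) (pow_entry_nonneg hB0 (n+1) k j))]
          congr 1
          conv_rhs => rw [pow_succ' B (n+1), Matrix.mul_apply]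

attribute [local instance] Matrix.linftyOpNormedRing Matrix.linftyOpNormedAlgebra

lemma summable_pow_entry {e : ℕ} (A : Matrix (Fin e) (Fin e) ℝ)
    (hspec : specRad A < 1) (k j : Fin e) :
    Summable (fun n : ℕ => |(A ^ n) k j|) := by
  haveI : Nonempty (Fin e) := ⟨k⟩
  haveI : CompleteSpace (Matrix (Fin e) (Fin e) ℂ) := FiniteDimensional.complete ℂ _
  set a : Matrix (Fin e) (Fin e) ℂ := A.map Complex.ofReal with ha
  have h1 : spectralRadius ℂ a < 1 := by
    obtain ⟨z, hz, hz2⟩ :=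
      spectrum.exists_nnnorm_eq_spectralRadius_of_nonempty (spectrum.nonempty a)
    rw [← hz2]
    have h3 : ‖z‖ ≤ specRad A :=
      le_csSup (((spectrum.isCompact a).image continuous_norm).bddAbove) ⟨z, hz, rfl⟩
    have h4 : ‖z‖ < 1 := lt_of_le_of_lt h3 hspec
    have h5 : ‖z‖₊ < 1 := h4
    exact_mod_cast h5
  obtain ⟨r, hr1, hr2⟩ := ENNReal.lt_iff_exists_nnreal_btwn.1 h1
  have h2 := spectrum.pow_nnnorm_pow_one_div_tendsto_nhds_spectralRadius a
  have h6 : ∀ᶠ n : ℕ in atTop, (‖a ^ n‖₊ : ℝ≥0∞) ^ (1 / n : ℝ) < r :=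
    h2.eventually_lt_const hr1
  have h7 : ∀ᶠ n : ℕ in atTop, ‖a ^ n‖ ≤ (r:ℝ) ^ n := by
    filter_upwards [h6, eventually_ge_atTop 1] with n hn hn1
    have hn0 : (n:ℝ) ≠ 0 := by positivity
    have h8 : ((‖a ^ n‖₊ : ℝ≥0∞) ^ (1 / n : ℝ)) ^ (n:ℝ) ≤ (r:ℝ≥0∞) ^ (n:ℝ) :=
      ENNReal.rpow_le_rpow hn.le (by positivity)
    rw [← ENNReal.rpow_mul, one_div, inv_mul_cancel₀ hn0, ENNReal.rpow_one] at h8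
    rw [ENNReal.rpow_natCast] at h8
    have h9 : ‖a ^ n‖₊ ≤ r ^ n := by exact_mod_cast h8
    have h10 : ‖a ^ n‖ ≤ ((r ^ n : ℝ≥0) : ℝ) := by exact_mod_cast h9
    simpa using h10
  have hsum : Summable (fun n : ℕ => ‖a ^ n‖) := by
    obtain ⟨N, hN⟩ := eventually_atTop.1 h7
    have hgeo : Summable (fun n : ℕ => (r:ℝ) ^ (n + N)) := by
      apply (summable_nat_add_iff N).2
      exact summable_geometric_of_lt_one r.coe_nonneg (by exact_mod_cast hr2)
    have : Summable (fun n : ℕ => ‖a ^ (n + N)‖) :=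
      Summable.of_nonneg_of_le (fun n => norm_nonneg _)
        (fun n => hN (n + N) (Nat.le_add_left _ _)) hgeo
    exact (summable_nat_add_iff N).1 this
  have entry_le : ∀ (M : Matrix (Fin e) (Fin e) ℂ) (i j : Fin e), ‖M i j‖ ≤ ‖M‖ := by
    intro M i j
    have h10 : ‖M i j‖₊ ≤ ‖M‖₊ := by
      rw [Matrix.linfty_opNNNorm_def]
      exact le_trans
        (Finset.single_le_sum (f := fun j => ‖M i j‖₊) (fun _ _ => zero_le)
          (Finset.mem_univ j))
        (Finset.le_sup (f := fun i => ∑ j, ‖M i j‖₊) (Finset.mem_univ i))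
    exact_mod_cast h10
  apply Summable.of_nonneg_of_le (fun n => abs_nonneg _) _ hsum
  intro n
  have hpow : a ^ n = (A ^ n).map Complex.ofReal := by
    rw [ha]
    have := map_pow (Complex.ofRealHom.mapMatrix (m := Fin e)) A n
    simp only [RingHom.mapMatrix_apply] at this
    exact this.symm
  have : ‖(a ^ n) k j‖ = |(A ^ n) k j| := by
    rw [hpow]
    simp [Matrix.map_apply, Complex.norm_real]
  rw [← this]
  exact entry_le _ k j

lemma B_pow {e m : ℕ} (B : Matrix (Fin e ⊕ Fin m) (Fin e ⊕ Fin m) ℝ)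
    (A : Matrix (Fin e) (Fin e) ℝ)
    (h0 : ∀ i k, B i (Sum.inr k) = 0)
    (h1 : ∀ a b, B (Sum.inl a) (Sum.inl b) = A a b) :
    ∀ n (i : Fin e ⊕ Fin m),
      (∀ j0 : Fin m, (B^(n+1)) i (Sum.inr j0) = 0) ∧
      (∀ j0 : Fin e, (B^(n+1)) i (Sum.inl j0) = ∑ k, B i (Sum.inl k) * (A^n) k j0) := by
  intro n
  induction n with
  | zero =>
    intro i
    refine ⟨fun j0 => by rw [pow_one]; exact h0 i j0, fun j0 => ?_⟩
    rw [pow_one, pow_zero]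
    simp [Matrix.one_apply]
  | succ n ih =>
    intro i
    constructor
    · intro j0
      rw [pow_succ, Matrix.mul_apply]
      apply Finset.sum_eq_zero
      intro l _
      rw [h0 l j0, mul_zero]
    · intro j0
      rw [pow_succ, Matrix.mul_apply, Fintype.sum_sum_type]
      have hz : ∀ c : Fin m, (B^(n+1)) i (Sum.inr c) * B (Sum.inr c) (Sum.inl j0)
          = 0 := fun c => by rw [(ih i).1 c, zero_mul]
      rw [Finset.sum_congr rfl (fun c _ => hz c), Finset.sum_const, smul_zero, add_zero]
      have hrw : ∀ a : Fin e, (B^(n+1)) i (Sum.inl a) * B (Sum.inl a) (Sum.inl j0)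
          = ∑ k, B i (Sum.inl k) * ((A^n) k a * A a j0) := by
        intro a
        rw [(ih i).2 a, h1 a j0, Finset.sum_mul]
        apply Finset.sum_congr rfl
        intro k _
        ring
      rw [Finset.sum_congr rfl (fun a _ => hrw a), Finset.sum_comm]
      apply Finset.sum_congr rfl
      intro k _
      rw [← Finset.mul_sum, pow_succ, Matrix.mul_apply]

lemma summable_bound {e m : ℕ} (B : Matrix (Fin e ⊕ Fin m) (Fin e ⊕ Fin m) ℝ)
    (A : Matrix (Fin e) (Fin e) ℝ)
    (h0 : ∀ i k, B i (Sum.inr k) = 0)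
    (h1 : ∀ a b, B (Sum.inl a) (Sum.inl b) = A a b)
    (hA : specRad A < 1) (i : Fin e ⊕ Fin m) (j : Fin e ⊕ Fin m) :
    Summable (fun n : ℕ => (B^(n+1)) i j) := by
  cases j with
  | inr j0 =>
    have : (fun n : ℕ => (B^(n+1)) i (Sum.inr j0)) = fun _ => (0:ℝ) :=
      funext fun n => (B_pow B A h0 h1 n i).1 j0
    rw [this]; exact summable_zero
  | inl j0 =>
    have : (fun n : ℕ => (B^(n+1)) i (Sum.inl j0))
        = fun n => ∑ k, B i (Sum.inl k) * (A^n) k j0 :=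
      funext fun n => (B_pow B A h0 h1 n i).2 j0
    rw [this]
    apply summable_sum
    intro k _
    exact (summable_abs_iff.mp (summable_pow_entry A hA k j0)).mul_left _

theorem stmt7 (e m : ℕ) (α : Matrix (Fin e ⊕ Fin m) (Fin e ⊕ Fin m) ℝ)
    (f : (Fin e ⊕ Fin m) → (Fin e ⊕ Fin m) → ℝ → ℝ)
    (hα : ∀ i j, 0 ≤ α i j)
    (hf0 : ∀ i j t, 0 ≤ f i j t)
    (hfm : ∀ i j, Measurable (f i j))
    (hfi : ∀ i j, IntegrableOn (f i j) (Set.Ioi 0))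
    (hf1 : ∀ i j, ∫ t in Set.Ioi (0:ℝ), f i j t = 1)
    (φE : Matrix (Fin e ⊕ Fin m) (Fin e ⊕ Fin m) (ℝ → ℝ))
    (hφEl : ∀ i k, φE i (Sum.inl k) = fun t => α i (Sum.inl k) * f i (Sum.inl k) t)
    (hφEr : ∀ i k, φE i (Sum.inr k) = 0)
    (hspec : specRad (Matrix.of fun i j => α (Sum.inl i) (Sum.inl j)) < 1) :
    ∀ i j, Summable (fun n : ℕ => L1norm (mconvPow φE n i j)) ∧
      ∃ g : ℝ → ℝ,
        Tendsto (fun N : ℕ =>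
            L1norm (fun t => (∑ n ∈ Finset.range N, mconvPow φE n i j t) - g t))
          atTop (nhds 0) := by
  intro i j
  classical
  set B : Matrix (Fin e ⊕ Fin m) (Fin e ⊕ Fin m) ℝ :=
    Matrix.of (fun i' j' => Sum.elim (fun k => α i' (Sum.inl k)) (fun _ => (0:ℝ)) j') with hBdef
  have hB0 : ∀ i' j', 0 ≤ B i' j' := by
    intro i' j'
    cases j' with
    | inl k => simpa [hBdef] using hα i' (Sum.inl k)
    | inr k => simp [hBdef]
  have hφm : ∀ i' j', Measurable (φE i' j') := by
    intro i' j'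
    cases j' with
    | inl k => rw [hφEl]; exact measurable_const.mul (hfm i' (Sum.inl k))
    | inr k => rw [hφEr]; exact measurable_const
  have hφ0 : ∀ i' j' t, 0 ≤ t → 0 ≤ φE i' j' t := by
    intro i' j' t _
    cases j' with
    | inl k => rw [hφEl]; exact mul_nonneg (hα _ _) (hf0 _ _ t)
    | inr k => rw [hφEr]; exact le_refl _
  have hBφ : ∀ i' j', eI (φE i' j') = ENNReal.ofReal (B i' j') := by
    intro i' j'
    cases j' with
    | inr k => rw [hφEr]; simp [eI, hBdef]
    | inl k =>
      rw [hφEl]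
      have hint : (∫⁻ t in Set.Ioi (0:ℝ), ENNReal.ofReal (f i' (Sum.inl k) t)) = 1 := by
        rw [← ofReal_integral_eq_lintegral_ofReal (hfi i' (Sum.inl k))
          (ae_restrict_of_forall_mem measurableSet_Ioi fun t _ => hf0 i' (Sum.inl k) t),
          hf1 i' (Sum.inl k)]
        exact ENNReal.ofReal_one
      rw [eI]
      have hmul : ∀ t, ENNReal.ofReal (α i' (Sum.inl k) * f i' (Sum.inl k) t)
          = ENNReal.ofReal (α i' (Sum.inl k)) * ENNReal.ofReal (f i' (Sum.inl k) t) :=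
        fun t => ENNReal.ofReal_mul (hα _ _)
      simp only [hmul]
      rw [lintegral_const_mul'' (ENNReal.ofReal (α i' (Sum.inl k)))
        (f := fun t => ENNReal.ofReal (f i' (Sum.inl k) t))
        ((ENNReal.measurable_ofReal.comp (hfm i' (Sum.inl k))).aemeasurable), hint, mul_one]
      simp [hBdef]
  have key := mconvPow_good φE B hφm hφ0 hBφ hB0
  set A : Matrix (Fin e) (Fin e) ℝ := Matrix.of (fun a b => α (Sum.inl a) (Sum.inl b)) with hAdef
  have hb_sum : Summable (fun n : ℕ => (B^(n+1)) i j) := by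
    apply summable_bound B A
    · intro i' k; simp [hBdef]
    · intro a b; simp [hBdef, hAdef]
    · exact hspec
  -- L1 norm facts
  have hL1eq : ∀ n, L1norm (mconvPow φE n i j)
      = (eI (mconvPow φE n i j)).toReal := by
    intro n
    obtain ⟨⟨hpos, H, hHm, hHe⟩, hbd⟩ := key n i j
    have hev : (fun t => |mconvPow φE n i j t|)
        =ᵐ[volume.restrict (Set.Ioi 0)] fun t => |H t| :=
      ae_restrict_of_forall_mem measurableSet_Ioi fun t ht => by
        simp only [hHe t ht]
    rw [L1norm, integral_eq_lintegral_of_nonneg_ae (ae_of_all _ fun t => abs_nonneg _)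
      (hHm.abs.aestronglyMeasurable.congr hev.symm)]
    congr 1
    apply setLIntegral_congr_fun measurableSet_Ioi
    intro t ht
    beta_reduce
    rw [abs_of_nonneg (hpos t ht.le)]
  have hL1le : ∀ n, L1norm (mconvPow φE n i j) ≤ (B^(n+1)) i j := by
    intro n
    rw [hL1eq n]
    calc (eI (mconvPow φE n i j)).toReal
        ≤ (ENNReal.ofReal ((B^(n+1)) i j)).toReal :=
          ENNReal.toReal_mono ENNReal.ofReal_ne_top (key n i j).2
      _ = (B^(n+1)) i j := ENNReal.toReal_ofReal (pow_entry_nonneg hB0 (n+1) i j)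
  have hL1nn : ∀ n, 0 ≤ L1norm (mconvPow φE n i j) :=
    fun n => integral_nonneg fun t => abs_nonneg _
  refine ⟨Summable.of_nonneg_of_le hL1nn hL1le hb_sum, ?_⟩
  choose H hHm hHe using fun n => (key n i j).1.2
  have hpos : ∀ n t, 0 ≤ t → 0 ≤ mconvPow φE n i j t := fun n => (key n i j).1.1
  set u : ℝ → ℝ≥0∞ := fun t => ∑' n, ENNReal.ofReal (H n t) with hu
  have hum : Measurable u :=
    Measurable.ennreal_tsum fun n => ENNReal.measurable_ofReal.comp (hHm n)
  have heIH : ∀ n, (∫⁻ t in Set.Ioi (0:ℝ), ENNReal.ofReal (H n t))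
      = eI (mconvPow φE n i j) := by
    intro n
    rw [eI]
    apply setLIntegral_congr_fun measurableSet_Ioi
    intro t ht
    beta_reduce
    rw [hHe n t ht]
  have hfin : (∑' n, eI (mconvPow φE n i j)) ≠ ∞ := by
    have h2 : (∑' n, eI (mconvPow φE n i j)) ≤ ∑' n, ENNReal.ofReal ((B^(n+1)) i j) :=
      ENNReal.tsum_le_tsum fun n => (key n i j).2
    have h3 : (∑' n : ℕ, ENNReal.ofReal ((B^(n+1)) i j))
        = ENNReal.ofReal (∑' n : ℕ, (B^(n+1)) i j) :=
      (ENNReal.ofReal_tsum_of_nonneg (fun n => pow_entry_nonneg hB0 (n+1) i j) hb_sum).symm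
    exact ne_top_of_le_ne_top (by rw [h3]; exact ENNReal.ofReal_ne_top) h2
  have huint : (∫⁻ t in Set.Ioi (0:ℝ), u t) = ∑' n, eI (mconvPow φE n i j) := by
    rw [hu]
    rw [lintegral_tsum (f := fun n t => ENNReal.ofReal (H n t))
      fun n => (ENNReal.measurable_ofReal.comp (hHm n)).aemeasurable]
    exact tsum_congr heIH
  have hae : ∀ᵐ t ∂(volume.restrict (Set.Ioi (0:ℝ))), u t < ∞ :=
    ae_lt_top hum (by rw [huint]; exact hfin)
  refine ⟨fun t => (u t).toReal, ?_⟩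
  have hkey : ∀ᵐ t ∂(volume.restrict (Set.Ioi (0:ℝ))), ∀ N : ℕ,
      ENNReal.ofReal |(∑ n ∈ Finset.range N, mconvPow φE n i j t) - (u t).toReal|
        = ∑' n : ℕ, ENNReal.ofReal (H (n + N) t) := by
    filter_upwards [hae, ae_restrict_mem measurableSet_Ioi] with t hut ht
    intro N
    have ht' : (0:ℝ) < t := ht
    have ha0 : ∀ n, 0 ≤ H n t := fun n => (hHe n t ht') ▸ hpos n t ht'.le
    have hsa : Summable (fun n => H n t) := by
      apply summable_of_sum_range_le (c := (u t).toReal) ha0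
      intro N'
      have h4 : ENNReal.ofReal (∑ n ∈ Finset.range N', H n t) ≤ u t := by
        rw [ENNReal.ofReal_sum_of_nonneg fun n _ => ha0 n]
        exact ENNReal.sum_le_tsum (Finset.range N')
      exact (ENNReal.ofReal_le_iff_le_toReal hut.ne).1 h4
    have hgt : (u t).toReal = ∑' n, H n t := by
      rw [hu]
      simp only
      rw [← ENNReal.ofReal_tsum_of_nonneg ha0 hsa, ENNReal.toReal_ofReal (tsum_nonneg ha0)]
    have hps : (∑ n ∈ Finset.range N, mconvPow φE n i j t)
        = ∑ n ∈ Finset.range N, H n t :=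
      Finset.sum_congr rfl fun n _ => hHe n t ht'
    rw [hps, hgt]
    have hsplit := Summable.sum_add_tsum_nat_add N hsa
    have hdiff : (∑ n ∈ Finset.range N, H n t) - ∑' n, H n t = -(∑' n, H (n + N) t) := by
      rw [← hsplit]; ring
    rw [hdiff, abs_neg, abs_of_nonneg (tsum_nonneg fun n => ha0 (n + N))]
    exact ENNReal.ofReal_tsum_of_nonneg (fun n => ha0 (n+N)) ((summable_nat_add_iff N).2 hsa)
  have hL1d : ∀ N : ℕ,
      L1norm (fun t => (∑ n ∈ Finset.range N, mconvPow φE n i j t) - (u t).toReal)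
      = (∑' n : ℕ, eI (mconvPow φE (n + N) i j)).toReal := by
    intro N
    have hDm : Measurable (fun t => |(∑ n ∈ Finset.range N, H n t) - (u t).toReal|) :=
      ((Finset.measurable_sum _ fun n _ => hHm n).sub hum.ennreal_toReal).abs
    have hev : (fun t => |(∑ n ∈ Finset.range N, mconvPow φE n i j t) - (u t).toReal|)
        =ᵐ[volume.restrict (Set.Ioi 0)]
          (fun t => |(∑ n ∈ Finset.range N, H n t) - (u t).toReal|) :=
      ae_restrict_of_forall_mem measurableSet_Ioi fun t ht => by
        simp only [Finset.sum_congr rfl fun n _ => hHe n t ht]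
    rw [L1norm, integral_eq_lintegral_of_nonneg_ae (ae_of_all _ fun t => abs_nonneg _)
      (hDm.aestronglyMeasurable.congr hev.symm)]
    congr 1
    rw [lintegral_congr_ae (by filter_upwards [hkey] with t h using h N)]
    rw [lintegral_tsum (f := fun n t => ENNReal.ofReal (H (n + N) t))
      fun n => (ENNReal.measurable_ofReal.comp (hHm (n+N))).aemeasurable]
    exact tsum_congr fun n => heIH (n + N)
  have hT : Tendsto (fun N : ℕ => (∑' n : ℕ, eI (mconvPow φE (n + N) i j)))
      atTop (nhds 0) := ENNReal.tendsto_sum_nat_add _ hfin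
  have hT2 := (ENNReal.tendsto_toReal (a := 0) (by simp)).comp hT
  simp only [ENNReal.toReal_zero] at hT2
  exact hT2.congr fun N => (hL1d N).symm
end

section
/- Let φ_E be a d × d nonnegative kernel with zero E^c columns, branching matrix blocks α^{EE}, α^{E^cE} with ρ(α^{EE}) < 1, and let ψ be a d × d nonnegative kernel with entrywise L¹ norm matrix α_{E^c} = [[0, α^{EE^c}], [0, α^{E^cE^c}]]. Then the entrywise L¹ norms of (Σ_{n=1}^∞ φ_E^{⊗n}) * ψ are bounded above, entrywise, by Ω α_{E^c}, where Ω = [[(I - α^{EE})⁻¹ - I, 0], [α^{E^cE}(I - α^{EE})⁻¹, 0]]. -/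
open MeasureTheory Matrix Filter

open ENNReal NNReal in
lemma aux_measurable_conv {F G : ℝ → ℝ} (hF : Measurable F) (hG : Measurable G) :
    Measurable fun t => ∫ s in (0:ℝ)..t, F (t - s) * G s := by
  have h1 : (fun t => ∫ s in (0:ℝ)..t, F (t - s) * G s)
      = fun t => (if (0:ℝ) ≤ t then (1:ℝ) else -1) *
        ∫ s, Set.indicator {q : ℝ × ℝ | q.2 ∈ Set.uIoc (0:ℝ) q.1}
          (fun q => F (q.1 - q.2) * G q.2) (t, s) := by
    funext t
    rw [intervalIntegral.intervalIntegral_eq_integral_uIoc, smul_eq_mul]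
    congr 1
    rw [← MeasureTheory.integral_indicator measurableSet_uIoc]
    congr 1 with s
  rw [h1]
  have hset : MeasurableSet {q : ℝ × ℝ | q.2 ∈ Set.uIoc (0:ℝ) q.1} := by
    have : {q : ℝ × ℝ | q.2 ∈ Set.uIoc (0:ℝ) q.1}
        = {q : ℝ × ℝ | min 0 q.1 < q.2} ∩ {q : ℝ × ℝ | q.2 ≤ max 0 q.1} := by
      ext q; simp [Set.uIoc, Set.mem_Ioc]
    rw [this]
    exact (measurableSet_lt (measurable_const.min measurable_fst) measurable_snd).inter
      (measurableSet_le measurable_snd (measurable_const.max measurable_fst))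
  have hV : Measurable (Set.indicator {q : ℝ × ℝ | q.2 ∈ Set.uIoc (0:ℝ) q.1}
      (fun q => F (q.1 - q.2) * G q.2)) :=
    Measurable.indicator ((hF.comp (measurable_fst.sub measurable_snd)).mul
      (hG.comp measurable_snd)) hset
  exact (Measurable.ite measurableSet_Ici measurable_const measurable_const).mul
    (hV.stronglyMeasurable.integral_prod_right'.measurable)

open ENNReal NNReal in
lemma aux_key_tonelli (F G : ℝ → ℝ≥0∞) (hF : Measurable F) (hG : Measurable G) :
    ∫⁻ t in Set.Ioi (0:ℝ), ∫⁻ s in Set.Ioc (0:ℝ) t, F (t - s) * G s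
      ≤ (∫⁻ u in Set.Ioi (0:ℝ), F u) * ∫⁻ s in Set.Ioi (0:ℝ), G s := by
  set K : ℝ × ℝ → ℝ≥0∞ :=
    Set.indicator {q : ℝ × ℝ | 0 < q.2 ∧ q.2 ≤ q.1} (fun q => F (q.1 - q.2) * G q.2) with hK
  have hKset : MeasurableSet {q : ℝ × ℝ | 0 < q.2 ∧ q.2 ≤ q.1} :=
    (measurableSet_lt measurable_const measurable_snd).inter
      (measurableSet_le measurable_snd measurable_fst)
  have hKm : Measurable K :=
    Measurable.indicator ((hF.comp (measurable_fst.sub measurable_snd)).mul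
      (hG.comp measurable_snd)) hKset
  have h1 : ∀ t : ℝ, ∫⁻ s in Set.Ioc (0:ℝ) t, F (t - s) * G s = ∫⁻ s, K (t, s) := by
    intro t
    rw [← lintegral_indicator measurableSet_Ioc]
    refine lintegral_congr fun s => ?_
    simp only [hK, Set.indicator_apply, Set.mem_setOf_eq, Set.mem_Ioc]
  calc ∫⁻ t in Set.Ioi (0:ℝ), ∫⁻ s in Set.Ioc (0:ℝ) t, F (t - s) * G s
      = ∫⁻ t in Set.Ioi (0:ℝ), ∫⁻ s, K (t, s) := lintegral_congr fun t => h1 t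
    _ ≤ ∫⁻ t, ∫⁻ s, K (t, s) := setLIntegral_le_lintegral _ _
    _ = ∫⁻ s, ∫⁻ t, K (t, s) := lintegral_lintegral_swap hKm.aemeasurable
    _ = ∫⁻ s, (Set.Ioi (0:ℝ)).indicator G s * ∫⁻ u in Set.Ici (0:ℝ), F u := by
        refine lintegral_congr fun s => ?_
        by_cases hs : 0 < s
        · have hKts : ∀ t, K (t, s) = (Set.Ici s).indicator (fun t => F (t - s)) t * G s := by
            intro t
            simp only [hK, Set.indicator_apply, Set.mem_setOf_eq, Set.mem_Ici]
            by_cases ht : s ≤ t <;> simp [hs, ht]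
          simp_rw [hKts]
          rw [lintegral_mul_const (G s) (f := (Set.Ici s).indicator (fun t => F (t - s)))
            (Measurable.indicator
              (show Measurable fun t : ℝ => F (t - s) from
                hF.comp (measurable_id.sub measurable_const)) measurableSet_Ici)]
          have h2 : ∀ t : ℝ, (Set.Ici s).indicator (fun t => F (t - s)) t
              = ((Set.Ici (0:ℝ)).indicator F) (t - s) := by
            intro t
            simp only [Set.indicator_apply, Set.mem_Ici, sub_nonneg]
          rw [lintegral_congr h2, lintegral_sub_right_eq_self ((Set.Ici (0:ℝ)).indicator F) s,
            lintegral_indicator measurableSet_Ici, Set.indicator_of_mem (Set.mem_Ioi.mpr hs),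
            mul_comm]
        · have hKts : ∀ t, K (t, s) = 0 := by
            intro t; simp [hK, Set.indicator_apply, hs]
          simp_rw [hKts]
          rw [lintegral_zero, Set.indicator_of_notMem (by simpa using hs), zero_mul]
    _ = (∫⁻ u in Set.Ioi (0:ℝ), F u) * ∫⁻ s in Set.Ioi (0:ℝ), G s := by
        rw [lintegral_mul_const _ (hG.indicator measurableSet_Ioi),
          lintegral_indicator measurableSet_Ioi, mul_comm]
        congr 1
        exact setLIntegral_congr (Ioi_ae_eq_Ici (μ := volume) (a := (0:ℝ))).symm

open ENNReal NNReal in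
lemma aux_conv_eL1_le (F G : ℝ → ℝ) (Fb Gb : ℝ → ℝ≥0∞) (hFb : Measurable Fb) (hGb : Measurable Gb)
    (hFle : ∀ t, 0 ≤ t → ENNReal.ofReal |F t| ≤ Fb t)
    (hGle : ∀ t, 0 < t → ENNReal.ofReal |G t| ≤ Gb t) :
    ∫⁻ t in Set.Ioi (0:ℝ), ENNReal.ofReal |∫ s in (0:ℝ)..t, F (t - s) * G s|
      ≤ (∫⁻ u in Set.Ioi (0:ℝ), Fb u) * ∫⁻ s in Set.Ioi (0:ℝ), Gb s := by
  refine le_trans ?_ (aux_key_tonelli Fb Gb hFb hGb)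
  refine setLIntegral_mono' measurableSet_Ioi fun t ht => ?_
  have ht' : (0:ℝ) < t := ht
  rw [intervalIntegral.integral_of_le ht'.le]
  calc ENNReal.ofReal |∫ s in Set.Ioc (0:ℝ) t, F (t - s) * G s|
      = (‖∫ s in Set.Ioc (0:ℝ) t, F (t - s) * G s‖₊ : ℝ≥0∞) := by
        rw [← enorm_eq_nnnorm, ← ofReal_norm, Real.norm_eq_abs]
    _ ≤ ∫⁻ s in Set.Ioc (0:ℝ) t, ‖F (t - s) * G s‖₊ :=
        enorm_integral_le_lintegral_enorm _
    _ ≤ ∫⁻ s in Set.Ioc (0:ℝ) t, Fb (t - s) * Gb s := by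
        refine setLIntegral_mono' measurableSet_Ioc fun s hs => ?_
        have h1 : ((‖F (t - s) * G s‖₊ : ℝ≥0∞))
            = ENNReal.ofReal |F (t - s)| * ENNReal.ofReal |G s| := by
          rw [← enorm_eq_nnnorm, ← ofReal_norm, Real.norm_eq_abs, abs_mul,
            ENNReal.ofReal_mul (abs_nonneg _)]
        rw [h1]
        exact mul_le_mul' (hFle _ (by linarith [hs.2])) (hGle _ hs.1)

open ENNReal NNReal in
set_option maxHeartbeats 1000000 in
lemma aux_norm_summable_pow {e : ℕ} (αEE : Matrix (Fin e) (Fin e) ℝ) (hspec : specRad αEE < 1) :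
    ∀ i j, Summable fun n : ℕ => |(αEE ^ n) i j| := by
  letI : NormedRing (Matrix (Fin e) (Fin e) ℂ) := Matrix.linftyOpNormedRing
  letI : NormedAlgebra ℂ (Matrix (Fin e) (Fin e) ℂ) := Matrix.linftyOpNormedAlgebra
  set B : Matrix (Fin e) (Fin e) ℂ := αEE.map Complex.ofReal with hB
  have hbd : BddAbove ((fun z : ℂ => ‖z‖) '' spectrum ℂ B) := by
    obtain ⟨R, hR⟩ := (Metric.isBounded_iff_subset_closedBall 0).mp
      (spectrum.isBounded (𝕜 := ℂ) B)
    refine ⟨R, fun x hx => ?_⟩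
    obtain ⟨k, hk, rfl⟩ := hx
    have := hR hk
    simpa using mem_closedBall_zero_iff.mp this
  have h1 : spectralRadius ℂ B < 1 := by
    have hle : spectralRadius ℂ B ≤ ENNReal.ofReal (specRad αEE) := by
      rw [spectralRadius]
      refine iSup₂_le fun k hk => ?_
      rw [← enorm_eq_nnnorm, ← ofReal_norm]
      exact ENNReal.ofReal_le_ofReal (le_csSup hbd ⟨k, hk, rfl⟩)
    exact lt_of_le_of_lt hle (ENNReal.ofReal_lt_one.mpr hspec)
  obtain ⟨r, hr1, hr2⟩ := exists_between h1
  have hgel := spectrum.pow_nnnorm_pow_one_div_tendsto_nhds_spectralRadius B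
  have hev : ∀ᶠ n : ℕ in atTop, (‖B ^ n‖₊ : ℝ≥0∞) ^ (1/(n:ℝ)) < r :=
    hgel.eventually_lt_const hr1
  have hnorm : ∀ᶠ n : ℕ in atTop, (‖B ^ n‖₊ : ℝ≥0∞) ≤ r ^ n := by
    refine (hev.and (Filter.eventually_ge_atTop 1)).mono fun n hn => ?_
    have hn0 : ((n:ℝ)) ≠ 0 := by
      have : (1:ℕ) ≤ n := hn.2
      positivity
    have hx := ENNReal.rpow_le_rpow hn.1.le (Nat.cast_nonneg n)
    rwa [← ENNReal.rpow_mul, one_div, inv_mul_cancel₀ hn0, ENNReal.rpow_one,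
      ENNReal.rpow_natCast] at hx
  have hrne : r ≠ ⊤ := (lt_of_lt_of_le hr2 le_top).ne
  set c : ℝ≥0 := r.toNNReal with hc
  have hc1 : (c:ℝ) < 1 := by
    have : r < (1:ℝ≥0∞) := hr2
    rw [← ENNReal.coe_toNNReal hrne] at this
    exact_mod_cast this
  have hsum : Summable fun n : ℕ => ‖B ^ n‖ := by
    refine Summable.of_norm_bounded_eventually_nat
      (summable_geometric_of_lt_one c.coe_nonneg hc1) ?_
    obtain ⟨N, hN⟩ := Filter.eventually_atTop.mp hnorm
    refine Filter.eventually_atTop.mpr ⟨N, fun n hn => ?_⟩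
    have h := hN n hn
    rw [← ENNReal.coe_toNNReal hrne, ← ENNReal.coe_pow, ENNReal.coe_le_coe] at h
    rw [Real.norm_eq_abs, abs_of_nonneg (norm_nonneg _), ← coe_nnnorm]
    exact_mod_cast h
  have hmapn : ∀ n : ℕ, (αEE ^ n).map Complex.ofReal = B ^ n := by
    intro n
    have h0 : ∀ M : Matrix (Fin e) (Fin e) ℝ, M.map Complex.ofReal
        = (Complex.ofRealHom.mapMatrix : Matrix (Fin e) (Fin e) ℝ →+* _) M := by
      intro M; rw [RingHom.mapMatrix_apply]; rfl
    rw [h0, map_pow, hB, h0]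
  have hentry : ∀ (n : ℕ) (i j : Fin e), |(αEE ^ n) i j| ≤ ‖B ^ n‖ := by
    intro n i j
    have h1 : |(αEE ^ n) i j| = ‖(B ^ n) i j‖ := by
      rw [← hmapn n]
      simp [Matrix.map_apply]
    rw [h1]
    have h2 : ‖(B ^ n) i j‖₊ ≤ ‖B ^ n‖₊ := by
      rw [Matrix.linfty_opNNNorm_def]
      calc ‖(B ^ n) i j‖₊ ≤ ∑ j' : Fin e, ‖(B ^ n) i j'‖₊ :=
            Finset.single_le_sum (f := fun j' => ‖(B ^ n) i j'‖₊)
              (fun _ _ => zero_le) (Finset.mem_univ j)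
        _ ≤ _ := Finset.le_sup (f := fun i => ∑ j' : Fin e, ‖(B ^ n) i j'‖₊)
              (Finset.mem_univ i)
    exact_mod_cast h2
  intro i j
  refine Summable.of_norm_bounded hsum fun n => ?_
  rw [Real.norm_eq_abs, abs_abs]
  exact hentry n i j

lemma aux_tele_sum (g : ℕ → ℝ) (hg : Summable g) : ∑' n : ℕ, (g n - g (n+1)) = g 0 := by
  have h1 : Summable fun n => g (n+1) := (_root_.summable_nat_add_iff 1).mpr hg
  rw [Summable.tsum_sub hg h1, Summable.tsum_eq_zero_add hg]
  ring

lemma aux_neumann_inv {e : ℕ} (αEE : Matrix (Fin e) (Fin e) ℝ)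
    (hS : ∀ i j, Summable fun n : ℕ => (αEE ^ n) i j) :
    (1 - αEE)⁻¹ = Matrix.of fun i j => ∑' n : ℕ, (αEE ^ n) i j := by
  set S : Matrix (Fin e) (Fin e) ℝ := Matrix.of fun i j => ∑' n : ℕ, (αEE ^ n) i j with hSdef
  have key : (1 - αEE) * S = 1 := by
    ext i j
    rw [Matrix.mul_apply]
    have h1 : ∀ k, (1 - αEE) i k * S k j = ∑' n : ℕ, (1 - αEE) i k * (αEE ^ n) k j := by
      intro k
      exact (Summable.tsum_mul_left _ (hS k j)).symm
    calc ∑ k, (1 - αEE) i k * S k j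
        = ∑ k, ∑' n : ℕ, (1 - αEE) i k * (αEE ^ n) k j := Finset.sum_congr rfl fun k _ => h1 k
      _ = ∑' n : ℕ, ∑ k, (1 - αEE) i k * (αEE ^ n) k j :=
          (Summable.tsum_finsetSum fun k _ => (hS k j).mul_left _).symm
      _ = ∑' n : ℕ, ((αEE ^ n) i j - (αEE ^ (n+1)) i j) := by
          refine tsum_congr fun n => ?_
          have h2 : ∑ k, (1 - αEE) i k * (αEE ^ n) k j = ((1 - αEE) * αEE ^ n) i j :=
            (Matrix.mul_apply).symm
          rw [h2, sub_mul, one_mul, ← pow_succ', Matrix.sub_apply]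
      _ = (αEE ^ 0) i j := aux_tele_sum _ (hS i j)
      _ = (1 : Matrix (Fin e) (Fin e) ℝ) i j := by rw [pow_zero]
  exact Matrix.inv_eq_right_inv key

lemma aux_mconvPow_measurable {ι : Type*} [Fintype ι] (φ : Matrix ι ι (ℝ → ℝ))
    (hφ : ∀ i j, Measurable (φ i j)) : ∀ n i j, Measurable (mconvPow φ n i j) := by
  intro n
  induction n with
  | zero => exact hφ
  | succ n ih =>
    intro i j
    show Measurable fun t => ∑ k, ∫ s in (0:ℝ)..t, φ i k (t - s) * mconvPow φ n k j s
    exact Finset.measurable_sum Finset.univ fun k _ => aux_measurable_conv (hφ i k) (ih k j)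

lemma aux_mconvPow_nonneg {ι : Type*} [Fintype ι] (φ : Matrix ι ι (ℝ → ℝ))
    (hφ : ∀ i j t, 0 ≤ φ i j t) : ∀ n i j t, 0 ≤ t → 0 ≤ mconvPow φ n i j t := by
  intro n
  induction n with
  | zero => exact fun i j t _ => hφ i j t
  | succ n ih =>
    intro i j t ht
    show 0 ≤ ∑ k, ∫ s in (0:ℝ)..t, φ i k (t - s) * mconvPow φ n k j s
    refine Finset.sum_nonneg fun k _ => ?_
    refine intervalIntegral.integral_nonneg ht fun s hs => ?_
    exact mul_nonneg (hφ i k (t - s)) (ih k j s hs.1)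

lemma aux_pow_entry_nonneg {N : Type*} [Fintype N] [DecidableEq N] (M : Matrix N N ℝ)
    (h : ∀ i j, 0 ≤ M i j) : ∀ (n : ℕ) i j, 0 ≤ (M ^ n) i j := by
  intro n
  induction n with
  | zero =>
    intro i j
    rw [pow_zero]
    by_cases hij : i = j <;> simp [Matrix.one_apply, hij]
  | succ n ih =>
    intro i j
    rw [pow_succ, Matrix.mul_apply]
    exact Finset.sum_nonneg fun k _ => mul_nonneg (ih i k) (h k j)

open ENNReal NNReal in
set_option maxHeartbeats 2000000 in
theorem stmt18 (e m : ℕ) (α : Matrix (Fin e ⊕ Fin m) (Fin e ⊕ Fin m) ℝ)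
    (f : (Fin e ⊕ Fin m) → (Fin e ⊕ Fin m) → ℝ → ℝ)
    (hα : ∀ i j, 0 ≤ α i j)
    (hf0 : ∀ i j t, 0 ≤ f i j t)
    (hfm : ∀ i j, Measurable (f i j))
    (hfi : ∀ i j, IntegrableOn (f i j) (Set.Ioi 0))
    (hf1 : ∀ i j, ∫ t in Set.Ioi (0:ℝ), f i j t = 1)
    (φE : Matrix (Fin e ⊕ Fin m) (Fin e ⊕ Fin m) (ℝ → ℝ))
    (hφEl : ∀ i k, φE i (Sum.inl k) = fun t => α i (Sum.inl k) * f i (Sum.inl k) t)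
    (hφEr : ∀ i k, φE i (Sum.inr k) = 0)
    (αEE : Matrix (Fin e) (Fin e) ℝ) (hEE : αEE = Matrix.of fun i j => α (Sum.inl i) (Sum.inl j))
    (αQ : Matrix (Fin m) (Fin e) ℝ) (hQ : αQ = Matrix.of fun i j => α (Sum.inr i) (Sum.inl j))
    (hspec : specRad αEE < 1)
    (ψ : Matrix (Fin e ⊕ Fin m) (Fin e ⊕ Fin m) (ℝ → ℝ))
    (hψ0 : ∀ i j t, 0 ≤ ψ i j t)
    (hψm : ∀ i j, Measurable (ψ i j))
    (hψi : ∀ i j, IntegrableOn (ψ i j) (Set.Ioi 0))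
    (hψE : ∀ i k, ψ i (Sum.inl k) = 0)
    (αEc : Matrix (Fin e ⊕ Fin m) (Fin e ⊕ Fin m) ℝ)
    (hαEc : ∀ i j, αEc i j = L1norm (ψ i j))
    (H : Matrix (Fin e ⊕ Fin m) (Fin e ⊕ Fin m) (ℝ → ℝ))
    (hH : ∀ i j t, H i j t = ∑' n : ℕ, mconvPow φE n i j t) :
    ∀ i j, L1norm (mconv H ψ i j) ≤
      (Matrix.fromBlocks ((1 - αEE)⁻¹ - 1) (0 : Matrix (Fin e) (Fin m) ℝ)
          (αQ * (1 - αEE)⁻¹) 0 * αEc) i j := by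
  classical
  intro i j
  -- the L1-norm matrix of φE
  set A : Matrix (Fin e ⊕ Fin m) (Fin e ⊕ Fin m) ℝ := Matrix.fromBlocks αEE 0 αQ 0 with hA
  have hA0 : ∀ i' j', 0 ≤ A i' j' := by
    intro i' j'
    cases i' with
    | inl a => cases j' with
      | inl b => rw [hA]; show 0 ≤ αEE a b; rw [hEE]; exact hα _ _
      | inr b => rw [hA]; show 0 ≤ (0 : Matrix (Fin e) (Fin m) ℝ) a b; simp
    | inr a => cases j' with
      | inl b => rw [hA]; show 0 ≤ αQ a b; rw [hQ]; exact hα _ _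
      | inr b => rw [hA]; show 0 ≤ (0 : Matrix (Fin m) (Fin m) ℝ) a b; simp
  have hAppos : ∀ (n : ℕ) i' k, 0 ≤ (A ^ n) i' k := aux_pow_entry_nonneg A hA0
  have hEEsum : ∀ i' j', Summable fun n : ℕ => (αEE ^ n) i' j' :=
    fun i' j' => (aux_norm_summable_pow αEE hspec i' j').of_abs
  have hAp : ∀ n : ℕ, A ^ (n+1) = Matrix.fromBlocks (αEE ^ (n+1)) 0 (αQ * αEE ^ n) 0 := by
    intro n
    induction n with
    | zero => rw [pow_one, hA, pow_one, pow_zero, Matrix.mul_one]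
    | succ n ih =>
      rw [pow_succ, ih, hA, Matrix.fromBlocks_multiply]
      simp only [Matrix.mul_zero, Matrix.zero_mul, add_zero, zero_add]
      rw [← pow_succ, Matrix.mul_assoc, ← pow_succ]
  have hApsum : ∀ i' k, Summable fun n : ℕ => (A ^ (n+1)) i' k := by
    intro i' k
    cases i' with
    | inl a =>
      cases k with
      | inl b =>
        have hfun : (fun n : ℕ => (A ^ (n+1)) (Sum.inl a) (Sum.inl b))
            = fun n : ℕ => (αEE ^ (n+1)) a b := by
          funext n; rw [hAp n, Matrix.fromBlocks_apply₁₁]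
        rw [hfun]
        exact (_root_.summable_nat_add_iff 1).mpr (hEEsum a b)
      | inr b =>
        have hfun : (fun n : ℕ => (A ^ (n+1)) (Sum.inl a) (Sum.inr b)) = fun _ => (0:ℝ) := by
          funext n; rw [hAp n, Matrix.fromBlocks_apply₁₂, Matrix.zero_apply]
        rw [hfun]; exact summable_zero
    | inr a =>
      cases k with
      | inl b =>
        have hfun : (fun n : ℕ => (A ^ (n+1)) (Sum.inr a) (Sum.inl b))
            = fun n : ℕ => ∑ k', αQ a k' * (αEE ^ n) k' b := by
          funext n; rw [hAp n, Matrix.fromBlocks_apply₂₁]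
          exact Matrix.mul_apply
        rw [hfun]
        exact summable_sum fun k' _ => (hEEsum k' b).mul_left _
      | inr b =>
        have hfun : (fun n : ℕ => (A ^ (n+1)) (Sum.inr a) (Sum.inr b)) = fun _ => (0:ℝ) := by
          funext n; rw [hAp n, Matrix.fromBlocks_apply₂₂, Matrix.zero_apply]
        rw [hfun]; exact summable_zero
  set Ω : Matrix (Fin e ⊕ Fin m) (Fin e ⊕ Fin m) ℝ :=
    Matrix.of (fun i' k => ∑' n : ℕ, (A ^ (n+1)) i' k) with hΩdef
  have hΩpos : ∀ i' k, 0 ≤ Ω i' k := fun i' k => tsum_nonneg fun n => hAppos (n+1) i' k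
  have hSinv : (1 - αEE)⁻¹ = Matrix.of (fun i' j' => ∑' n : ℕ, (αEE ^ n) i' j') :=
    aux_neumann_inv αEE hEEsum
  have hΩeq : Matrix.fromBlocks ((1 - αEE)⁻¹ - 1) (0 : Matrix (Fin e) (Fin m) ℝ)
      (αQ * (1 - αEE)⁻¹) 0 = Ω := by
    ext i' k
    cases i' with
    | inl a =>
      cases k with
      | inl b =>
        show ((1 - αEE)⁻¹ - 1) a b = Ω (Sum.inl a) (Sum.inl b)
        have hR : Ω (Sum.inl a) (Sum.inl b) = ∑' n : ℕ, (αEE ^ (n+1)) a b := by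
          rw [hΩdef]
          show (∑' n : ℕ, (A ^ (n+1)) (Sum.inl a) (Sum.inl b)) = _
          refine tsum_congr fun n => ?_
          rw [hAp n, Matrix.fromBlocks_apply₁₁]
        rw [hR, hSinv, Matrix.sub_apply]
        show (∑' n : ℕ, (αEE ^ n) a b) - (1 : Matrix (Fin e) (Fin e) ℝ) a b = _
        have h0 := Summable.tsum_eq_zero_add (hEEsum a b)
        have h1 : (αEE ^ 0) a b = (1 : Matrix (Fin e) (Fin e) ℝ) a b := by rw [pow_zero]
        rw [h1] at h0
        linarith [h0]
      | inr b =>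
        show (0 : Matrix (Fin e) (Fin m) ℝ) a b = Ω (Sum.inl a) (Sum.inr b)
        have hR : Ω (Sum.inl a) (Sum.inr b) = ∑' _ : ℕ, (0:ℝ) := by
          rw [hΩdef]
          show (∑' n : ℕ, (A ^ (n+1)) (Sum.inl a) (Sum.inr b)) = _
          refine tsum_congr fun n => ?_
          rw [hAp n, Matrix.fromBlocks_apply₁₂, Matrix.zero_apply]
        rw [hR, tsum_zero]; simp
    | inr a =>
      cases k with
      | inl b =>
        show (αQ * (1 - αEE)⁻¹) a b = Ω (Sum.inr a) (Sum.inl b)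
        have hR : Ω (Sum.inr a) (Sum.inl b) = ∑' n : ℕ, ∑ k', αQ a k' * (αEE ^ n) k' b := by
          rw [hΩdef]
          show (∑' n : ℕ, (A ^ (n+1)) (Sum.inr a) (Sum.inl b)) = _
          refine tsum_congr fun n => ?_
          rw [hAp n, Matrix.fromBlocks_apply₂₁]
          exact Matrix.mul_apply
        rw [hR, Summable.tsum_finsetSum fun k' _ => (hEEsum k' b).mul_left _, hSinv, Matrix.mul_apply]
        refine Finset.sum_congr rfl fun k' _ => ?_
        exact (Summable.tsum_mul_left _ (hEEsum k' b)).symm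
      | inr b =>
        show (0 : Matrix (Fin m) (Fin m) ℝ) a b = Ω (Sum.inr a) (Sum.inr b)
        have hR : Ω (Sum.inr a) (Sum.inr b) = ∑' _ : ℕ, (0:ℝ) := by
          rw [hΩdef]
          show (∑' n : ℕ, (A ^ (n+1)) (Sum.inr a) (Sum.inr b)) = _
          refine tsum_congr fun n => ?_
          rw [hAp n, Matrix.fromBlocks_apply₂₂, Matrix.zero_apply]
        rw [hR, tsum_zero]; simp
  have hαEc0 : ∀ k j', 0 ≤ αEc k j' := by
    intro k j'
    rw [hαEc]
    exact integral_nonneg fun t => abs_nonneg _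
  rw [hΩeq]
  have hRHS0 : 0 ≤ (Ω * αEc) i j := by
    rw [Matrix.mul_apply]
    exact Finset.sum_nonneg fun k _ => mul_nonneg (hΩpos i k) (hαEc0 k j)
  -- basic measurability / positivity of φE
  have hφEm : ∀ i' k, Measurable (φE i' k) := by
    intro i' k
    cases k with
    | inl b => rw [hφEl]; exact (hfm i' (Sum.inl b)).const_mul _
    | inr b => rw [hφEr]; exact measurable_const
  have hφE0 : ∀ i' k t, 0 ≤ φE i' k t := by
    intro i' k t
    cases k with
    | inl b =>
      have := congrFun (hφEl i' b) t
      rw [this]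
      exact mul_nonneg (hα _ _) (hf0 _ _ _)
    | inr b =>
      have := congrFun (hφEr i' b) t
      rw [this]
      exact le_rfl
  have hPm : ∀ n k j', Measurable (mconvPow φE n k j') := aux_mconvPow_measurable φE hφEm
  have hP0 : ∀ n k j' t, 0 ≤ t → 0 ≤ mconvPow φE n k j' t := aux_mconvPow_nonneg φE hφE0
  -- L1 norms of φE entries
  have heφ : ∀ i' k, ∫⁻ t in Set.Ioi (0:ℝ), ENNReal.ofReal (φE i' k t)
      = ENNReal.ofReal (A i' k) := by
    intro i' k
    cases k with
    | inl b =>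
      have h1 : ∀ t : ℝ, ENNReal.ofReal (φE i' (Sum.inl b) t)
          = ENNReal.ofReal (α i' (Sum.inl b)) * ENNReal.ofReal (f i' (Sum.inl b) t) := by
        intro t
        rw [congrFun (hφEl i' b) t, ENNReal.ofReal_mul (hα _ _)]
      rw [lintegral_congr h1,
        lintegral_const_mul _ (hfm i' (Sum.inl b)).ennreal_ofReal,
        ← ofReal_integral_eq_lintegral_ofReal (hfi i' (Sum.inl b))
          (ae_of_all _ fun t => hf0 i' (Sum.inl b) t),
        hf1, ENNReal.ofReal_one, mul_one]
      congr 1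
      cases i' with
      | inl a => rw [hA]; show α _ _ = αEE a b; rw [hEE]; rfl
      | inr a => rw [hA]; show α _ _ = αQ a b; rw [hQ]; rfl
    | inr b =>
      have h1 : ∀ t : ℝ, ENNReal.ofReal (φE i' (Sum.inr b) t) = 0 := by
        intro t
        rw [congrFun (hφEr i' b) t]
        simp
      rw [lintegral_congr h1, lintegral_zero]
      cases i' with
      | inl a =>
        rw [hA]
        show (0:ℝ≥0∞) = ENNReal.ofReal ((0 : Matrix (Fin e) (Fin m) ℝ) a b)
        simp
      | inr a =>
        rw [hA]
        show (0:ℝ≥0∞) = ENNReal.ofReal ((0 : Matrix (Fin m) (Fin m) ℝ) a b)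
        simp
  -- L1 bound for powers
  have hpowL1 : ∀ (n : ℕ) i' k, ∫⁻ t in Set.Ioi (0:ℝ), ENNReal.ofReal (mconvPow φE n i' k t)
      ≤ ENNReal.ofReal ((A ^ (n+1)) i' k) := by
    intro n
    induction n with
    | zero =>
      intro i' k
      rw [pow_one]
      exact le_of_eq (heφ i' k)
    | succ n ih =>
      intro i' k
      have step1 : ∫⁻ t in Set.Ioi (0:ℝ), ENNReal.ofReal (mconvPow φE (n+1) i' k t)
          ≤ ∑ k' : Fin e ⊕ Fin m, ∫⁻ t in Set.Ioi (0:ℝ),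
            ENNReal.ofReal |∫ s in (0:ℝ)..t, φE i' k' (t - s) * mconvPow φE n k' k s| := by
        rw [← lintegral_finset_sum' Finset.univ fun k' _ =>
          ((aux_measurable_conv (hφEm i' k') (hPm n k' k)).abs.ennreal_ofReal).aemeasurable]
        refine setLIntegral_mono' measurableSet_Ioi fun t ht => ?_
        show ENNReal.ofReal (∑ k', ∫ s in (0:ℝ)..t, φE i' k' (t - s) * mconvPow φE n k' k s) ≤ _
        calc ENNReal.ofReal (∑ k', ∫ s in (0:ℝ)..t, φE i' k' (t - s) * mconvPow φE n k' k s)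
            ≤ ENNReal.ofReal (∑ k', |∫ s in (0:ℝ)..t, φE i' k' (t - s) * mconvPow φE n k' k s|) :=
              ENNReal.ofReal_le_ofReal (le_trans (le_abs_self _) (Finset.abs_sum_le_sum_abs _ _))
          _ = ∑ k', ENNReal.ofReal |∫ s in (0:ℝ)..t, φE i' k' (t - s) * mconvPow φE n k' k s| :=
              ENNReal.ofReal_sum_of_nonneg fun _ _ => abs_nonneg _
      refine le_trans step1 ?_
      have step2 : ∀ k' : Fin e ⊕ Fin m, ∫⁻ t in Set.Ioi (0:ℝ),
          ENNReal.ofReal |∫ s in (0:ℝ)..t, φE i' k' (t - s) * mconvPow φE n k' k s|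
          ≤ ENNReal.ofReal (A i' k') * ENNReal.ofReal ((A ^ (n+1)) k' k) := by
        intro k'
        refine le_trans (aux_conv_eL1_le (φE i' k') (mconvPow φE n k' k)
          (fun u => ENNReal.ofReal (φE i' k' u)) (fun s => ENNReal.ofReal (mconvPow φE n k' k s))
          (hφEm i' k').ennreal_ofReal (hPm n k' k).ennreal_ofReal
          (fun t ht => by rw [abs_of_nonneg (hφE0 i' k' t)])
          (fun s hs => by rw [abs_of_nonneg (hP0 n k' k s hs.le)])) ?_
        rw [heφ i' k']
        exact mul_le_mul' le_rfl (ih k' k)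
      refine le_trans (Finset.sum_le_sum fun k' _ => step2 k') ?_
      have step3 : ∑ k' : Fin e ⊕ Fin m, ENNReal.ofReal (A i' k')
          * ENNReal.ofReal ((A ^ (n+1)) k' k) = ENNReal.ofReal ((A ^ (n+2)) i' k) := by
        calc ∑ k' : Fin e ⊕ Fin m, ENNReal.ofReal (A i' k') * ENNReal.ofReal ((A ^ (n+1)) k' k)
            = ∑ k' : Fin e ⊕ Fin m, ENNReal.ofReal (A i' k' * (A ^ (n+1)) k' k) :=
              Finset.sum_congr rfl fun k' _ => (ENNReal.ofReal_mul (hA0 i' k')).symm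
          _ = ENNReal.ofReal (∑ k', A i' k' * (A ^ (n+1)) k' k) :=
              (ENNReal.ofReal_sum_of_nonneg fun k' _ =>
                mul_nonneg (hA0 i' k') (hAppos (n+1) k' k)).symm
          _ = ENNReal.ofReal ((A * A ^ (n+1)) i' k) := by rw [Matrix.mul_apply]
          _ = ENNReal.ofReal ((A ^ (n+2)) i' k) := by rw [← pow_succ']
      exact le_of_eq step3
  -- the main estimate
  by_cases hum : AEStronglyMeasurable (fun t => |mconv H ψ i j t|) (volume.restrict (Set.Ioi 0))
  swap
  · have h0 : L1norm (mconv H ψ i j) = 0 := integral_non_aestronglyMeasurable hum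
    rw [h0]
    exact hRHS0
  · -- ENNReal-valued majorant of H
    set GH : (Fin e ⊕ Fin m) → ℝ → ℝ≥0∞ :=
      fun k t => ∑' n : ℕ, ENNReal.ofReal (mconvPow φE n i k t) with hGH
    have hGHm : ∀ k, Measurable (GH k) :=
      fun k => Measurable.ennreal_tsum fun n => (hPm n i k).ennreal_ofReal
    set H' : (Fin e ⊕ Fin m) → ℝ → ℝ := fun k t => (GH k t).toReal with hH'
    have hH'm : ∀ k, Measurable (H' k) := fun k => (hGHm k).ennreal_toReal
    have hH'eq : ∀ k t, 0 ≤ t → H i k t = H' k t := by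
      intro k t ht
      rw [hH]
      by_cases hsm : Summable fun n => mconvPow φE n i k t
      · rw [hH']
        show _ = (GH k t).toReal
        rw [hGH]
        show _ = (∑' n : ℕ, ENNReal.ofReal (mconvPow φE n i k t)).toReal
        rw [← ENNReal.ofReal_tsum_of_nonneg (fun n => hP0 n i k t ht) hsm,
          ENNReal.toReal_ofReal (tsum_nonneg fun n => hP0 n i k t ht)]
      · rw [tsum_eq_zero_of_not_summable hsm]
        have htop : GH k t = ⊤ := by
          by_contra hne
          have hsm2 : Summable fun n => (ENNReal.ofReal (mconvPow φE n i k t)).toReal :=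
            ENNReal.summable_toReal hne
          exact hsm (hsm2.congr fun n => ENNReal.toReal_ofReal (hP0 n i k t ht))
        rw [hH']
        show (0:ℝ) = (GH k t).toReal
        rw [htop]
        simp
    have hH'le : ∀ k t, 0 ≤ t → ENNReal.ofReal |H' k t| ≤ GH k t := by
      intro k t _
      rw [hH']
      show ENNReal.ofReal |(GH k t).toReal| ≤ GH k t
      rw [abs_of_nonneg ENNReal.toReal_nonneg]
      exact ENNReal.ofReal_toReal_le
    have huval : ∀ t : ℝ, 0 < t →
        mconv H ψ i j t = ∑ k, ∫ s in (0:ℝ)..t, H' k (t - s) * ψ k j s := by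
      intro t ht
      show (∑ k, ∫ s in (0:ℝ)..t, H i k (t - s) * ψ k j s) = _
      refine Finset.sum_congr rfl fun k _ => ?_
      refine intervalIntegral.integral_congr fun s hs => ?_
      have hs' : 0 ≤ s ∧ s ≤ t := by rwa [Set.uIcc_of_le ht.le, Set.mem_Icc] at hs
      rw [hH'eq k (t - s) (by linarith [hs'.2])]
    -- the three factors
    have part1 : ∀ k, ∫⁻ t in Set.Ioi (0:ℝ), GH k t ≤ ENNReal.ofReal (Ω i k) := by
      intro k
      rw [hGH]
      show ∫⁻ t in Set.Ioi (0:ℝ), ∑' n : ℕ, ENNReal.ofReal (mconvPow φE n i k t) ≤ _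
      rw [lintegral_tsum fun n => ((hPm n i k).ennreal_ofReal).aemeasurable]
      calc ∑' n : ℕ, ∫⁻ t in Set.Ioi (0:ℝ), ENNReal.ofReal (mconvPow φE n i k t)
          ≤ ∑' n : ℕ, ENNReal.ofReal ((A ^ (n+1)) i k) :=
            ENNReal.tsum_le_tsum fun n => hpowL1 n i k
        _ = ENNReal.ofReal (∑' n : ℕ, (A ^ (n+1)) i k) :=
            (ENNReal.ofReal_tsum_of_nonneg (fun n => hAppos (n+1) i k) (hApsum i k)).symm
        _ = ENNReal.ofReal (Ω i k) := rfl
    have part2 : ∀ k, ∫⁻ s in Set.Ioi (0:ℝ), ENNReal.ofReal (ψ k j s)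
        = ENNReal.ofReal (αEc k j) := by
      intro k
      have h1 : αEc k j = ∫ t in Set.Ioi (0:ℝ), ψ k j t := by
        rw [hαEc]
        show (∫ t in Set.Ioi (0:ℝ), |ψ k j t|) = _
        exact integral_congr_ae (ae_of_all _ fun t => abs_of_nonneg (hψ0 k j t))
      rw [h1, ofReal_integral_eq_lintegral_ofReal (hψi k j) (ae_of_all _ fun t => hψ0 k j t)]
    have hbound : ∫⁻ t in Set.Ioi (0:ℝ), ENNReal.ofReal |mconv H ψ i j t|
        ≤ ENNReal.ofReal ((Ω * αEc) i j) := by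
      calc ∫⁻ t in Set.Ioi (0:ℝ), ENNReal.ofReal |mconv H ψ i j t|
          ≤ ∫⁻ t in Set.Ioi (0:ℝ),
              ∑ k, ENNReal.ofReal |∫ s in (0:ℝ)..t, H' k (t - s) * ψ k j s| := by
            refine setLIntegral_mono' measurableSet_Ioi fun t ht => ?_
            rw [huval t ht]
            calc ENNReal.ofReal |∑ k, ∫ s in (0:ℝ)..t, H' k (t - s) * ψ k j s|
                ≤ ENNReal.ofReal (∑ k, |∫ s in (0:ℝ)..t, H' k (t - s) * ψ k j s|) :=
                  ENNReal.ofReal_le_ofReal (Finset.abs_sum_le_sum_abs _ _)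
              _ = ∑ k, ENNReal.ofReal |∫ s in (0:ℝ)..t, H' k (t - s) * ψ k j s| :=
                  ENNReal.ofReal_sum_of_nonneg fun _ _ => abs_nonneg _
        _ = ∑ k, ∫⁻ t in Set.Ioi (0:ℝ),
              ENNReal.ofReal |∫ s in (0:ℝ)..t, H' k (t - s) * ψ k j s| :=
            lintegral_finset_sum' Finset.univ fun k _ =>
              ((aux_measurable_conv (hH'm k) (hψm k j)).abs.ennreal_ofReal).aemeasurable
        _ ≤ ∑ k, (∫⁻ t in Set.Ioi (0:ℝ), GH k t) * ∫⁻ s in Set.Ioi (0:ℝ),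
              ENNReal.ofReal (ψ k j s) :=
            Finset.sum_le_sum fun k _ => aux_conv_eL1_le (H' k) (ψ k j) (GH k)
              (fun s => ENNReal.ofReal (ψ k j s)) (hGHm k) (hψm k j).ennreal_ofReal
              (hH'le k) (fun s _ => by rw [abs_of_nonneg (hψ0 k j s)])
        _ ≤ ∑ k, ENNReal.ofReal (Ω i k) * ENNReal.ofReal (αEc k j) :=
            Finset.sum_le_sum fun k _ => mul_le_mul' (part1 k) (le_of_eq (part2 k))
        _ = ∑ k, ENNReal.ofReal (Ω i k * αEc k j) :=
            Finset.sum_congr rfl fun k _ => (ENNReal.ofReal_mul (hΩpos i k)).symm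
        _ = ENNReal.ofReal (∑ k, Ω i k * αEc k j) :=
            (ENNReal.ofReal_sum_of_nonneg fun k _ =>
              mul_nonneg (hΩpos i k) (hαEc0 k j)).symm
        _ = ENNReal.ofReal ((Ω * αEc) i j) := by rw [Matrix.mul_apply]
    show (∫ t in Set.Ioi (0:ℝ), |mconv H ψ i j t|) ≤ (Ω * αEc) i j
    rw [integral_eq_lintegral_of_nonneg_ae (ae_of_all _ fun t => abs_nonneg _) hum]
    exact ENNReal.toReal_le_of_le_ofReal hRHS0 hbound
end
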